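/- arXiv:1303.4082 — 8 statements merged into one kernel-verified Lean document; each statement's English description precedes it below -/
import Mathlib

section
/- Under the assumptions of the coercivity lemma (δ² > 0, μ > r, L > θ = (μ−r)/δ), the function h(π) = L·√(|πσ − z|² + Σᵢ|πγᵢ − uᵢ|²λᵢ) − π(μ − r) attains its minimum over ℝ at the unique point π₁* = (zσ + Σᵢuᵢγᵢλᵢ)/δ² + ((μ−r)/(δ²·√(L² − (μ−r)²/δ²)))·√(z² + Σᵢuᵢ²λᵢ − (zσ + Σᵢuᵢγᵢλᵢ)²/δ²), provided z² + Σᵢuᵢ²λᵢ − (zσ + Σᵢuᵢγᵢλᵢ)²/δ² > 0. -/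
theorem key_lemma (b R L k E : ℝ) (hb : 0 < b) (hR : 0 < R) (hk : 0 < k)
    (hL : 0 < L) (hE' : 0 < E) (hbE : b*E = b*L^2 - k^2) (s : ℝ) :
    (L * Real.sqrt (b*(k / (b * Real.sqrt E) * Real.sqrt R)^2 + R)
      - k*(k / (b * Real.sqrt E) * Real.sqrt R)
      ≤ L * Real.sqrt (b*s^2 + R) - k*s) ∧
    (s ≠ k / (b * Real.sqrt E) * Real.sqrt R →
      L * Real.sqrt (b*(k / (b * Real.sqrt E) * Real.sqrt R)^2 + R)
      - k*(k / (b * Real.sqrt E) * Real.sqrt R)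
      < L * Real.sqrt (b*s^2 + R) - k*s) := by
  have hsE : 0 < Real.sqrt E := Real.sqrt_pos.mpr hE'
  have hsR : 0 < Real.sqrt R := Real.sqrt_pos.mpr hR
  have hE2 : Real.sqrt E ^ 2 = E := Real.sq_sqrt hE'.le
  have hR2 : Real.sqrt R ^ 2 = R := Real.sq_sqrt hR.le
  set t₀ := k / (b * Real.sqrt E) * Real.sqrt R with ht₀
  have hQ0pos : 0 < b*t₀^2 + R := by positivity
  have hQspos : 0 < b*s^2 + R := by positivity
  set D0 := Real.sqrt (b*t₀^2 + R) with hD0def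
  set D := Real.sqrt (b*s^2 + R) with hDdef
  have hD0 : 0 < D0 := Real.sqrt_pos.mpr hQ0pos
  have hD : 0 < D := Real.sqrt_pos.mpr hQspos
  have hD0sq : D0^2 = b*t₀^2 + R := Real.sq_sqrt hQ0pos.le
  have hDsq : D^2 = b*s^2 + R := Real.sq_sqrt hQspos.le
  have ht0sq : t₀^2 = k^2*R/(b^2*E) := by
    rw [ht₀, mul_pow, div_pow, mul_pow, hE2, hR2]; ring
  have hD0val : D0 = L * Real.sqrt R / Real.sqrt E := by
    rw [hD0def, show b*t₀^2 + R = (L * Real.sqrt R / Real.sqrt E)^2 by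
      rw [ht0sq, div_pow, mul_pow, hR2, hE2]; field_simp; linear_combination hbE]
    exact Real.sqrt_sq (by positivity)
  have hkid : k * D0 = L * (b * t₀) := by
    rw [hD0val, ht₀]; field_simp
  have hprod : D * D0 = Real.sqrt ((b*s^2+R) * (b*t₀^2+R)) := by
    rw [hDdef, hD0def, ← Real.sqrt_mul hQspos.le]
  have hcs : R + b*t₀*s ≤ D * D0 := by
    rw [hprod]
    calc R + b*t₀*s ≤ |R + b*t₀*s| := le_abs_self _
      _ = Real.sqrt ((R + b*t₀*s)^2) := (Real.sqrt_sq_eq_abs _).symm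
      _ ≤ _ := Real.sqrt_le_sqrt (by nlinarith [mul_nonneg (mul_nonneg hb.le hR.le) (sq_nonneg (s - t₀))])
  have hid : L * D - k * s - (L * D0 - k * t₀) = L / D0 * (D * D0 - (R + b*t₀*s)) := by
    field_simp
    linear_combination (t₀ - s) * hkid - L * hD0sq
  constructor
  · have : 0 ≤ L / D0 * (D * D0 - (R + b*t₀*s)) := by
      apply mul_nonneg (by positivity); linarith
    linarith
  · intro hne
    have hcs' : R + b*t₀*s < D * D0 := by
      rw [hprod]
      calc R + b*t₀*s ≤ |R + b*t₀*s| := le_abs_self _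
        _ = Real.sqrt ((R + b*t₀*s)^2) := (Real.sqrt_sq_eq_abs _).symm
        _ < _ := by
            apply Real.sqrt_lt_sqrt (sq_nonneg _)
            have hpos : (0:ℝ) < b*R*(s-t₀)^2 := by
              have : s - t₀ ≠ 0 := sub_ne_zero.mpr hne
              positivity
            nlinarith
    have : 0 < L / D0 * (D * D0 - (R + b*t₀*s)) := by
      apply mul_pos (by positivity); linarith
    linarith

theorem stmt_4 (n : ℕ) (σ z μ r L : ℝ) (γ u lam : Fin n → ℝ)
    (hlam : ∀ i, 0 ≤ lam i)
    (hδ : 0 < σ^2 + ∑ i, (γ i)^2 * lam i)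
    (hμr : μ > r)
    (hL : L > (μ - r) / Real.sqrt (σ^2 + ∑ i, (γ i)^2 * lam i))
    (hR : 0 < z^2 + ∑ i, (u i)^2 * lam i
      - (z*σ + ∑ i, u i * γ i * lam i)^2/(σ^2 + ∑ i, (γ i)^2 * lam i)) :
    let δ2 := σ^2 + ∑ i, (γ i)^2 * lam i
    let h : ℝ → ℝ := fun π =>
      L * Real.sqrt ((π*σ - z)^2 + ∑ i, (π * γ i - u i)^2 * lam i) - π * (μ - r)
    let π₁ := (z*σ + ∑ i, u i * γ i * lam i)/δ2
      + (μ - r) / (δ2 * Real.sqrt (L^2 - (μ - r)^2/δ2))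
        * Real.sqrt (z^2 + ∑ i, (u i)^2 * lam i - (z*σ + ∑ i, u i * γ i * lam i)^2/δ2)
    (∀ π : ℝ, h π₁ ≤ h π) ∧ (∀ π : ℝ, π ≠ π₁ → h π₁ < h π) := by
  intro δ2 h π₁
  set b := σ^2 + ∑ i, (γ i)^2 * lam i with hbdef
  set a := z*σ + ∑ i, u i * γ i * lam i with hadef
  set c := z^2 + ∑ i, (u i)^2 * lam i with hcdef
  set R := c - a^2/b with hRdef
  set k := μ - r with hkdef
  have hδ2 : δ2 = b := rfl
  have hk : 0 < k := sub_pos.mpr hμr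
  have hsb : 0 < Real.sqrt b := Real.sqrt_pos.mpr hδ
  have hL0 : 0 < L := lt_trans (by positivity) hL
  set E := L^2 - k^2/b with hEdef
  have hE' : 0 < E := by
    have h1 : k / Real.sqrt b < L := hL
    have h2 : (k / Real.sqrt b)^2 < L^2 := by
      apply sq_lt_sq' _ h1
      · have : 0 < k / Real.sqrt b := by positivity
        linarith
    rw [div_pow, Real.sq_sqrt hδ.le] at h2
    rw [hEdef]; linarith
  have hbE : b*E = b*L^2 - k^2 := by
    rw [hEdef]; field_simp
  -- quadratic identity
  have hQ : ∀ π : ℝ, (π*σ - z)^2 + ∑ i, (π * γ i - u i)^2 * lam i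
      = b*(π - a/b)^2 + R := by
    intro π
    have hsum : ∑ i, (π * γ i - u i)^2 * lam i
        = π^2*(∑ i, (γ i)^2*lam i) - 2*π*(∑ i, u i*γ i*lam i) + ∑ i, (u i)^2*lam i := by
      rw [Finset.mul_sum, Finset.mul_sum, ← Finset.sum_sub_distrib, ← Finset.sum_add_distrib]
      exact Finset.sum_congr rfl fun i _ => by ring
    rw [hsum, hRdef, hbdef, hadef, hcdef]
    have hb0 : σ^2 + ∑ i, (γ i)^2 * lam i ≠ 0 := hδ.ne'
    field_simp
    ring
  have hh : ∀ π : ℝ, h π = (L * Real.sqrt (b*(π - a/b)^2 + R) - k*(π - a/b)) - k*(a/b) := by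
    intro π
    show L * Real.sqrt ((π*σ - z)^2 + ∑ i, (π * γ i - u i)^2 * lam i) - π * k = _
    rw [hQ π]; ring
  have hπ₁ : π₁ - a/b = k / (b * Real.sqrt E) * Real.sqrt R := by
    show a/b + k / (b * Real.sqrt E) * Real.sqrt R - a/b = _
    ring
  have key := fun s => key_lemma b R L k E hδ hR hk hL0 hE' hbE s
  constructor
  · intro π
    rw [hh π, hh π₁, hπ₁]
    have := (key (π - a/b)).1
    linarith
  · intro π hne
    rw [hh π, hh π₁, hπ₁]
    have hne' : π - a/b ≠ k / (b * Real.sqrt E) * Real.sqrt R := by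
      intro hcon
      apply hne
      have h2 : π - a/b = π₁ - a/b := by rw [hcon, hπ₁]
      linear_combination h2
    have := (key (π - a/b)).2 hne'
    linarith
end

section
/- Let δ² > 0, μ > r, L > θ = (μ−r)/δ, and let π₁* be the optimal hedging amount. Then the optimal generator f* := π₁*(μ−r) − L·√(|π₁*σ − z|² + Σᵢ|π₁*γᵢ − uᵢ|²λᵢ) equals ((zσ + Σᵢuᵢγᵢλᵢ)/δ)·θ − √(L² − θ²)·√(z² + Σᵢuᵢ²λᵢ − (zσ + Σᵢuᵢγᵢλᵢ)²/δ²). -/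
theorem stmt_6 (n : ℕ) (σ z μ r L : ℝ) (γ u lam : Fin n → ℝ)
    (hlam : ∀ i, 0 ≤ lam i)
    (hδ : 0 < σ^2 + ∑ i, (γ i)^2 * lam i)
    (hμr : μ > r)
    (hL : L > (μ - r) / Real.sqrt (σ^2 + ∑ i, (γ i)^2 * lam i))
    (hR : 0 ≤ z^2 + ∑ i, (u i)^2 * lam i
      - (z*σ + ∑ i, u i * γ i * lam i)^2/(σ^2 + ∑ i, (γ i)^2 * lam i)) :
    let δ2 := σ^2 + ∑ i, (γ i)^2 * lam i
    let δ := Real.sqrt δ2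
    let θ := (μ - r) / δ
    let R := z^2 + ∑ i, (u i)^2 * lam i - (z*σ + ∑ i, u i * γ i * lam i)^2/δ2
    let π₁ := (z*σ + ∑ i, u i * γ i * lam i)/δ2
      + (μ - r) / (δ2 * Real.sqrt (L^2 - (μ - r)^2/δ2)) * Real.sqrt R
    π₁ * (μ - r)
        - L * Real.sqrt ((π₁*σ - z)^2 + ∑ i, (π₁ * γ i - u i)^2 * lam i)
      = (z*σ + ∑ i, u i * γ i * lam i)/δ * θ
        - Real.sqrt (L^2 - θ^2) * Real.sqrt R := by
  intro δ2 δ θ R π₁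
  have hδ2def : δ2 = σ^2 + ∑ i, (γ i)^2 * lam i := rfl
  have hδdef0 : δ = Real.sqrt δ2 := rfl
  have hθdef : θ = (μ - r) / δ := rfl
  have hRdef : R = z^2 + ∑ i, (u i)^2 * lam i
      - (z*σ + ∑ i, u i * γ i * lam i)^2/δ2 := rfl
  have hπdef : π₁ = (z*σ + ∑ i, u i * γ i * lam i)/δ2
      + (μ - r) / (δ2 * Real.sqrt (L^2 - (μ - r)^2/δ2)) * Real.sqrt R := rfl
  clear_value δ2 δ θ R π₁
  have hδ2 : 0 < δ2 := hδ2def ▸ hδ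
  have hδpos : 0 < δ := hδdef0 ▸ Real.sqrt_pos.2 hδ2
  have hδsq : δ ^ 2 = δ2 := hδdef0 ▸ Real.sq_sqrt hδ2.le
  have hm : 0 < μ - r := sub_pos.2 hμr
  have hθpos : 0 < θ := by rw [hθdef]; exact div_pos hm hδpos
  have hLθ : θ < L := by rw [hθdef, hδdef0, hδ2def]; exact hL
  have hLpos : 0 < L := hθpos.trans hLθ
  have hD2 : 0 < L ^ 2 - θ ^ 2 := by nlinarith
  have hθ2 : θ ^ 2 = (μ - r) ^ 2 / δ2 := by
    rw [hθdef, div_pow, hδsq]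
  set D := Real.sqrt (L ^ 2 - θ ^ 2) with hDdef
  have hDpos : 0 < D := Real.sqrt_pos.2 hD2
  have hDsq : D ^ 2 = L ^ 2 - θ ^ 2 := Real.sq_sqrt hD2.le
  set s := Real.sqrt R with hsdef
  have hRnn : 0 ≤ R := by rw [hRdef, hδ2def]; exact hR
  have hs2 : s ^ 2 = R := Real.sq_sqrt hRnn
  have hsnn : 0 ≤ s := Real.sqrt_nonneg _
  set A := z * σ + ∑ i, u i * γ i * lam i with hA
  set S1 := ∑ i, (γ i) ^ 2 * lam i with hS1
  set S2 := ∑ i, u i * γ i * lam i with hS2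
  set S3 := ∑ i, (u i) ^ 2 * lam i with hS3
  have hπ : π₁ = A / δ2 + (μ - r) / (δ2 * D) * s := by
    have h1 : L ^ 2 - (μ - r) ^ 2 / δ2 = L ^ 2 - θ ^ 2 := by rw [hθ2]
    rw [hπdef, h1]
  have hsum : ∑ i, (π₁ * γ i - u i) ^ 2 * lam i
      = π₁ ^ 2 * S1 - 2 * π₁ * S2 + S3 := by
    rw [hS1, hS2, hS3, Finset.mul_sum, Finset.mul_sum, ← Finset.sum_sub_distrib,
      ← Finset.sum_add_distrib]
    exact Finset.sum_congr rfl fun i _ => by ring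
  have hδ2ne : δ2 ≠ 0 := hδ2.ne'
  have hDne : D ≠ 0 := hDpos.ne'
  have hδne : δ ≠ 0 := hδpos.ne'
  have hπδ : π₁ * δ2 * D = A * D + (μ - r) * s := by
    rw [hπ]; field_simp; all_goals ring
  have hRδ : R * δ2 = (z ^ 2 + S3) * δ2 - A ^ 2 := by
    rw [hRdef]; field_simp; all_goals ring
  have hDδ : D ^ 2 * δ2 = L ^ 2 * δ2 - (μ - r) ^ 2 := by
    rw [hDsq, hθ2]; field_simp; all_goals ring
  have hE2 : ((π₁ * σ - z) ^ 2 + (π₁ ^ 2 * S1 - 2 * π₁ * S2 + S3)) * D ^ 2 * δ2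
      = (s * L) ^ 2 * δ2 := by
    linear_combination (-π₁^2*δ2*D^2) * hδ2def + (2*π₁*δ2*D^2) * hA
      + (π₁*δ2*D - A*D + (μ-r)*s) * hπδ + (-D^2) * hRδ
      + ((μ-r)^2 - L^2*δ2) * hs2 + R * hDδ
  have hE : (π₁ * σ - z) ^ 2 + ∑ i, (π₁ * γ i - u i) ^ 2 * lam i
      = (s * L / D) ^ 2 := by
    rw [hsum, div_pow, eq_div_iff (pow_ne_zero 2 hDne)]
    exact mul_right_cancel₀ hδ2ne hE2
  rw [hE, Real.sqrt_sq (by positivity), hπ]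
  have hAθ : A / δ * θ = A * (μ - r) / δ2 := by
    rw [hθdef, div_mul_div_comm, ← pow_two, hδsq]
  have h2 : (μ - r) / (δ2 * D) * s * (μ - r) - L * (s * L / D) = -(D * s) := by
    field_simp
    linear_combination s * hDδ
  linear_combination (-1 : ℝ) * hAθ + h2
end

section
/- Fix t and market parameters with δ² > 0 and L ≥ θ ≥ 0. The map (z, u₁,...,uₙ) ↦ ((zσ + Σᵢuᵢγᵢλᵢ)/δ)·θ − √(L² − θ²)·√(z² + Σᵢuᵢ²λᵢ − (zσ + Σᵢuᵢγᵢλᵢ)²/δ²) is Lipschitz continuous with respect to the norm ‖(z,u)‖² = z² + Σᵢ uᵢ²λᵢ, with Lipschitz constant depending only on bounds for σ, γ, λ, θ, L. -/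
open RealInnerProductSpace
lemma core_lip {N : ℕ} (w : EuclideanSpace ℝ (Fin N)) (θ c : ℝ) (hθ : 0 ≤ θ) (hc : 0 ≤ c)
    (hw : ‖w‖ ≠ 0) (x y : EuclideanSpace ℝ (Fin N)) :
    |(⟪x, w⟫/‖w‖*θ - c*Real.sqrt (‖x‖^2 - ⟪x, w⟫^2/‖w‖^2))
      - (⟪y, w⟫/‖w‖*θ - c*Real.sqrt (‖y‖^2 - ⟪y, w⟫^2/‖w‖^2))| ≤ (θ + c) * ‖x - y‖ := by
  set g : EuclideanSpace ℝ (Fin N) → ℝ := fun v => Real.sqrt (‖v‖^2 - ⟪v, w⟫^2/‖w‖^2) with hg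
  have hm : (0:ℝ) < ‖w‖^2 := by positivity
  have key : ∀ v : EuclideanSpace ℝ (Fin N), g v = ‖v - (⟪v, w⟫/‖w‖^2) • w‖ := by
    intro v
    have : ‖v - (⟪v, w⟫/‖w‖^2) • w‖^2 = ‖v‖^2 - ⟪v, w⟫^2/‖w‖^2 := by
      rw [norm_sub_sq_real, real_inner_smul_right, norm_smul, mul_pow, Real.norm_eq_abs, sq_abs]
      field_simp
      ring
    rw [hg]
    simp only
    rw [← this, Real.sqrt_sq (norm_nonneg _)]
  have glip : ∀ v₁ v₂ : EuclideanSpace ℝ (Fin N), |g v₁ - g v₂| ≤ ‖v₁ - v₂‖ := by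
    intro v₁ v₂
    have hsub : ∀ a b : EuclideanSpace ℝ (Fin N), g a ≤ g b + g (a - b) := by
      intro a b
      rw [key, key, key]
      have : a - (⟪a, w⟫/‖w‖^2) • w
          = (b - (⟪b, w⟫/‖w‖^2) • w) + ((a - b) - (⟪a - b, w⟫/‖w‖^2) • w) := by
        rw [inner_sub_left]
        module
      rw [this]
      exact norm_add_le _ _
    have hle : ∀ v : EuclideanSpace ℝ (Fin N), g v ≤ ‖v‖ := by
      intro v
      rw [hg]
      simp only
      calc Real.sqrt (‖v‖^2 - ⟪v, w⟫^2/‖w‖^2) ≤ Real.sqrt (‖v‖^2) := by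
            apply Real.sqrt_le_sqrt
            have : (0:ℝ) ≤ ⟪v, w⟫^2/‖w‖^2 := by positivity
            linarith
        _ = ‖v‖ := Real.sqrt_sq (norm_nonneg _)
    rw [abs_sub_le_iff]
    constructor
    · have := hsub v₁ v₂
      have := hle (v₁ - v₂)
      linarith
    · have := hsub v₂ v₁
      have h2 : g (v₂ - v₁) ≤ ‖v₁ - v₂‖ := (hle _).trans (le_of_eq (norm_sub_rev _ _))
      linarith
  have cs : |⟪x - y, w⟫| ≤ ‖x - y‖ * ‖w‖ := abs_real_inner_le_norm _ _
  have h1 : |⟪x, w⟫/‖w‖*θ - ⟪y, w⟫/‖w‖*θ| ≤ θ * ‖x - y‖ := by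
    rw [show ⟪x, w⟫/‖w‖*θ - ⟪y, w⟫/‖w‖*θ = (⟪x - y, w⟫/‖w‖)*θ by rw [inner_sub_left]; ring,
      abs_mul, abs_div, abs_of_nonneg hθ, abs_of_nonneg (norm_nonneg w)]
    rw [div_mul_eq_mul_div, div_le_iff₀ (lt_of_le_of_ne (norm_nonneg w) (Ne.symm hw))]
    calc |⟪x - y, w⟫| * θ ≤ (‖x - y‖ * ‖w‖) * θ :=
          mul_le_mul_of_nonneg_right cs hθ
      _ = θ * ‖x - y‖ * ‖w‖ := by ring
  calc |(⟪x, w⟫/‖w‖*θ - c * g x) - (⟪y, w⟫/‖w‖*θ - c * g y)|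
      ≤ |⟪x, w⟫/‖w‖*θ - ⟪y, w⟫/‖w‖*θ| + |c * g x - c * g y| := by
        rw [show (⟪x, w⟫/‖w‖*θ - c * g x) - (⟪y, w⟫/‖w‖*θ - c * g y)
            = (⟪x, w⟫/‖w‖*θ - ⟪y, w⟫/‖w‖*θ) - (c * g x - c * g y) by ring]
        exact abs_sub _ _
    _ ≤ θ * ‖x - y‖ + c * ‖x - y‖ := by
        apply add_le_add h1
        rw [← mul_sub, abs_mul, abs_of_nonneg hc]
        exact mul_le_mul_of_nonneg_left (glip x y) hc
    _ = (θ + c) * ‖x - y‖ := by ring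

open RealInnerProductSpace
theorem stmt_7 (n : ℕ) (σ θ L : ℝ) (γ lam : Fin n → ℝ)
    (hlam : ∀ i, 0 ≤ lam i)
    (hδ : 0 < σ^2 + ∑ i, (γ i)^2 * lam i)
    (hθ : 0 ≤ θ) (hθL : θ ≤ L) :
    ∃ K : ℝ, 0 ≤ K ∧
      ∀ (z z' : ℝ) (u u' : Fin n → ℝ),
        |((z*σ + ∑ i, u i * γ i * lam i)/Real.sqrt (σ^2 + ∑ i, (γ i)^2 * lam i) * θ
            - Real.sqrt (L^2 - θ^2) * Real.sqrt (z^2 + ∑ i, (u i)^2 * lam i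
                - (z*σ + ∑ i, u i * γ i * lam i)^2/(σ^2 + ∑ i, (γ i)^2 * lam i)))
          - ((z'*σ + ∑ i, u' i * γ i * lam i)/Real.sqrt (σ^2 + ∑ i, (γ i)^2 * lam i) * θ
            - Real.sqrt (L^2 - θ^2) * Real.sqrt (z'^2 + ∑ i, (u' i)^2 * lam i
                - (z'*σ + ∑ i, u' i * γ i * lam i)^2/(σ^2 + ∑ i, (γ i)^2 * lam i)))|
        ≤ K * Real.sqrt ((z - z')^2 + ∑ i, (u i - u' i)^2 * lam i) := by
  set c := Real.sqrt (L^2 - θ^2) with hc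
  refine ⟨θ + c, by positivity, ?_⟩
  intro z z' u u'
  set X : ℝ → (Fin n → ℝ) → EuclideanSpace ℝ (Fin (n+1)) :=
    fun a p => WithLp.toLp 2 (Fin.cons a (fun i => p i * Real.sqrt (lam i)) : Fin (n+1) → ℝ) with hX
  set w : EuclideanSpace ℝ (Fin (n+1)) := X σ γ with hw
  have hinner : ∀ (a : ℝ) (p : Fin n → ℝ), ⟪X a p, w⟫ = a*σ + ∑ i, p i * γ i * lam i := by
    intro a p
    rw [PiLp.inner_apply]
    simp only [RCLike.inner_apply, conj_trivial, Fin.sum_univ_succ, hX, hw, PiLp.toLp_apply,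
      Fin.cons_zero, Fin.cons_succ]
    congr 1
    · ring
    apply Finset.sum_congr rfl
    intro i _
    rw [show γ i * Real.sqrt (lam i) * (p i * Real.sqrt (lam i))
        = p i * γ i * (Real.sqrt (lam i) * Real.sqrt (lam i)) by ring,
      Real.mul_self_sqrt (hlam i)]
  have hnormsq : ∀ (a : ℝ) (p : Fin n → ℝ), ‖X a p‖^2 = a^2 + ∑ i, (p i)^2 * lam i := by
    intro a p
    rw [EuclideanSpace.norm_eq, Real.sq_sqrt (by positivity)]
    simp only [Real.norm_eq_abs, sq_abs, Fin.sum_univ_succ, hX, PiLp.toLp_apply, Fin.cons_zero, Fin.cons_succ]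
    congr 1
    apply Finset.sum_congr rfl
    intro i _
    rw [mul_pow, Real.sq_sqrt (hlam i)]
  have hwsq : ‖w‖^2 = σ^2 + ∑ i, (γ i)^2 * lam i := hnormsq σ γ
  have hwnorm : ‖w‖ = Real.sqrt (σ^2 + ∑ i, (γ i)^2 * lam i) := by
    rw [← hwsq, Real.sqrt_sq (norm_nonneg _)]
  have hwne : ‖w‖ ≠ 0 := by
    rw [hwnorm]; positivity
  have hdiff : X z u - X z' u' = X (z - z') (fun i => u i - u' i) := by
    ext j
    refine Fin.cases ?_ ?_ j
    · simp [hX]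
    · intro i
      simp [hX]
      ring
  have H := core_lip w θ c hθ (Real.sqrt_nonneg _) hwne (X z u) (X z' u')
  rw [hdiff] at H
  have hnd : ‖X (z - z') (fun i => u i - u' i)‖
      = Real.sqrt ((z - z')^2 + ∑ i, (u i - u' i)^2 * lam i) := by
    rw [← Real.sqrt_sq (norm_nonneg (X (z - z') (fun i => u i - u' i))), hnormsq]
  rw [hinner z u, hinner z' u', hnormsq z u, hnormsq z' u', hwsq, hwnorm, hnd] at H
  exact H
end

section
/- Consider the constrained optimization problem: minimize zψ + Σᵢ uᵢφᵢλᵢ over (ψ, φ₁,...,φₙ) ∈ ℝ^{1+n} subject to ψσ + Σᵢ φᵢγᵢλᵢ = μ − r and ψ² + Σᵢ φᵢ²λᵢ ≤ L². Assume λᵢ > 0 for all i, δ² = σ² + Σᵢγᵢ²λᵢ > 0, and L > (μ−r)/δ ≥ 0. Then the minimum value equals ((zσ + Σᵢuᵢγᵢλᵢ)/δ²)(μ−r) − √(L² − (μ−r)²/δ²)·√(z² + Σᵢuᵢ²λᵢ − (zσ + Σᵢuᵢγᵢλᵢ)²/δ²). -/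
open Finset in
lemma weighted_cs {n : ℕ} (a c : ℝ) (f g w : Fin n → ℝ) (hw : ∀ i, 0 ≤ w i) :
    (a*c + ∑ i, f i * g i * w i)^2 ≤
      (a^2 + ∑ i, (f i)^2 * w i) * (c^2 + ∑ i, (g i)^2 * w i) := by
  have h := Finset.sum_mul_sq_le_sq_mul_sq Finset.univ
    (Fin.cons a (fun i => f i * Real.sqrt (w i)))
    (Fin.cons c (fun i => g i * Real.sqrt (w i)))
  simp only [Fin.sum_univ_succ, Fin.cons_zero, Fin.cons_succ] at h
  have e1 : ∀ i, f i * Real.sqrt (w i) * (g i * Real.sqrt (w i)) = f i * g i * w i := by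
    intro i
    have := Real.mul_self_sqrt (hw i)
    calc f i * Real.sqrt (w i) * (g i * Real.sqrt (w i))
        = f i * g i * (Real.sqrt (w i) * Real.sqrt (w i)) := by ring
      _ = f i * g i * w i := by rw [this]
  have e2 : ∀ i, (f i * Real.sqrt (w i))^2 = (f i)^2 * w i := by
    intro i; rw [mul_pow, Real.sq_sqrt (hw i)]
  have e3 : ∀ i, (g i * Real.sqrt (w i))^2 = (g i)^2 * w i := by
    intro i; rw [mul_pow, Real.sq_sqrt (hw i)]
  simp only [e1, e2, e3] at h
  exact h

theorem stmt_8 (n : ℕ) (σ z μ r L : ℝ) (γ u lam : Fin n → ℝ)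
    (hlam : ∀ i, 0 < lam i)
    (hδ : 0 < σ^2 + ∑ i, (γ i)^2 * lam i)
    (hθ : 0 ≤ (μ - r) / Real.sqrt (σ^2 + ∑ i, (γ i)^2 * lam i))
    (hL : L > (μ - r) / Real.sqrt (σ^2 + ∑ i, (γ i)^2 * lam i)) :
    IsLeast
      {y : ℝ | ∃ (ψ : ℝ) (φ : Fin n → ℝ),
        ψ * σ + ∑ i, φ i * γ i * lam i = μ - r ∧
        ψ^2 + ∑ i, (φ i)^2 * lam i ≤ L^2 ∧
        y = z * ψ + ∑ i, u i * φ i * lam i}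
      ((z*σ + ∑ i, u i * γ i * lam i)/(σ^2 + ∑ i, (γ i)^2 * lam i) * (μ - r)
        - Real.sqrt (L^2 - (μ - r)^2/(σ^2 + ∑ i, (γ i)^2 * lam i))
          * Real.sqrt (z^2 + ∑ i, (u i)^2 * lam i
              - (z*σ + ∑ i, u i * γ i * lam i)^2/(σ^2 + ∑ i, (γ i)^2 * lam i))) := by
  have hlam' : ∀ i, 0 ≤ lam i := fun i => (hlam i).le
  set G := ∑ i, (γ i)^2 * lam i with hGdef
  set AG := ∑ i, u i * γ i * lam i with hAGdef
  set U := ∑ i, (u i)^2 * lam i with hUdef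
  set S := σ^2 + G with hSdef
  set A := z*σ + AG with hAdef
  set B := z^2 + U with hBdef
  set m := μ - r with hmdef
  have hS : 0 < S := hδ
  have hSne : S ≠ 0 := hS.ne'
  set cb := A/S with hcbdef
  set d := B - A^2/S with hddef
  set e := L^2 - m^2/S with hedef
  have hcb : cb * S = A := by rw [hcbdef]; field_simp
  have he : 0 < e := by
    have h1 : (m/Real.sqrt S)^2 < L^2 := by nlinarith [hθ, hL]
    rw [div_pow, Real.sq_sqrt hS.le] at h1
    rw [hedef]; linarith
  have csba := weighted_cs z σ u γ lam hlam'
  rw [← hGdef, ← hAGdef, ← hUdef, ← hAdef, ← hBdef, ← hSdef] at csba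
  have hd' : 0 ≤ d := by
    rw [hddef, sub_nonneg, div_le_iff₀ hS]; linarith
  have hd2 : d * S = B*S - A^2 := by rw [hddef]; field_simp
  have he2 : e * S = L^2*S - m^2 := by rw [hedef]; field_simp
  set k := Real.sqrt e / Real.sqrt d with hkdef
  set α := (m + k*A)/S with hαdef
  have hαS : α * S = m + k*A := by rw [hαdef]; field_simp
  have hkd : k * d = Real.sqrt e * Real.sqrt d := by
    rcases eq_or_lt_of_le hd' with h0 | hpos
    · rw [← h0, Real.sqrt_zero]; simp
    · have hsd : Real.sqrt d ≠ 0 := (Real.sqrt_pos.mpr hpos).ne'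
      rw [hkdef]
      field_simp
      rw [Real.sq_sqrt hd']
  have hk2d : k^2 * d ≤ e := by
    rcases eq_or_lt_of_le hd' with h0 | hpos
    · rw [← h0, mul_zero]; exact he.le
    · have hk2 : k^2 = e/d := by
        rw [hkdef, div_pow, Real.sq_sqrt he.le, Real.sq_sqrt hd']
      rw [hk2, div_mul_cancel₀ _ hpos.ne']
  constructor
  · refine ⟨α*σ - k*z, fun i => α*γ i - k*u i, ?_, ?_, ?_⟩
    · show (α*σ - k*z)*σ + ∑ i, (α*γ i - k*u i) * γ i * lam i = m
      have s1 : ∑ i, (α*γ i - k*u i) * γ i * lam i = α*G - k*AG := by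
        rw [hGdef, hAGdef, Finset.mul_sum, Finset.mul_sum, ← Finset.sum_sub_distrib]
        exact Finset.sum_congr rfl fun i _ => by ring
      rw [s1]
      linear_combination hαS - α*hSdef + k*hAdef
    · show (α*σ - k*z)^2 + ∑ i, (α*γ i - k*u i)^2 * lam i ≤ L^2
      have s2 : ∑ i, (α*γ i - k*u i)^2 * lam i = α^2*G - 2*α*k*AG + k^2*U := by
        rw [hGdef, hAGdef, hUdef, Finset.mul_sum, Finset.mul_sum, Finset.mul_sum,
          ← Finset.sum_sub_distrib, ← Finset.sum_add_distrib]
        exact Finset.sum_congr rfl fun i _ => by ring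
      rw [s2]
      have hLHS : (α*σ - k*z)^2 + (α^2*G - 2*α*k*AG + k^2*U)
          = α^2*S - 2*α*k*A + k^2*B := by
        linear_combination -α^2*hSdef + 2*α*k*hAdef - k^2*hBdef
      rw [hLHS]
      have key : (α^2*S - 2*α*k*A + k^2*B)*S = m^2 + (k^2*d)*S := by
        linear_combination (α*S + m - k*A)*hαS - k^2*hd2
      have h3 : (k^2*d)*S ≤ e*S := mul_le_mul_of_nonneg_right hk2d hS.le
      have hfin : (α^2*S - 2*α*k*A + k^2*B)*S ≤ L^2*S := by linarith
      exact le_of_mul_le_mul_right hfin hS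
    · show cb * m - Real.sqrt e * Real.sqrt d
        = z*(α*σ - k*z) + ∑ i, u i * (α*γ i - k*u i) * lam i
      have s3 : ∑ i, u i * (α*γ i - k*u i) * lam i = α*AG - k*U := by
        rw [hAGdef, hUdef, Finset.mul_sum, Finset.mul_sum, ← Finset.sum_sub_distrib]
        exact Finset.sum_congr rfl fun i _ => by ring
      rw [s3, ← hkd]
      apply mul_right_cancel₀ hSne
      linear_combination m*hcb - k*hd2 + α*S*hAdef - k*S*hBdef - A*hαS
  · rintro y ⟨ψ, φ, h1, h2, rfl⟩
    set PG := ∑ i, φ i * γ i * lam i with hPGdef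
    set PU := ∑ i, (φ i)^2 * lam i with hPUdef
    set Y := ∑ i, u i * φ i * lam i with hYdef
    set cx := m/S with hcxdef
    have hcx : cx * S = m := by rw [hcxdef]; field_simp
    have cs := weighted_cs (z - cb*σ) (ψ - cx*σ) (fun i => u i - cb*γ i)
      (fun i => φ i - cx*γ i) lam hlam'
    have t1 : ∑ i, (u i - cb*γ i) * (φ i - cx*γ i) * lam i
        = Y - cx*AG - cb*PG + cb*cx*G := by
      rw [hYdef, hAGdef, hPGdef, hGdef, Finset.mul_sum, Finset.mul_sum, Finset.mul_sum,
        ← Finset.sum_sub_distrib, ← Finset.sum_sub_distrib, ← Finset.sum_add_distrib]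
      exact Finset.sum_congr rfl fun i _ => by ring
    have t2 : ∑ i, (u i - cb*γ i)^2 * lam i = U - 2*cb*AG + cb^2*G := by
      rw [hUdef, hAGdef, hGdef, Finset.mul_sum, Finset.mul_sum,
        ← Finset.sum_sub_distrib, ← Finset.sum_add_distrib]
      exact Finset.sum_congr rfl fun i _ => by ring
    have t3 : ∑ i, (φ i - cx*γ i)^2 * lam i = PU - 2*cx*PG + cx^2*G := by
      rw [hPUdef, hPGdef, hGdef, Finset.mul_sum, Finset.mul_sum,
        ← Finset.sum_sub_distrib, ← Finset.sum_add_distrib]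
      exact Finset.sum_congr rfl fun i _ => by ring
    simp only [t1, t2, t3] at cs
    have hinner : (z - cb*σ)*(ψ - cx*σ) + (Y - cx*AG - cb*PG + cb*cx*G)
        = z*ψ + Y - cb*m := by
      linear_combination cx*hAdef - cb*h1 - cb*cx*hSdef + cx*hcb
    have hfac1 : (z - cb*σ)^2 + (U - 2*cb*AG + cb^2*G) = B - cb*A := by
      linear_combination -hBdef + 2*cb*hAdef - cb^2*hSdef + cb*hcb
    have hdeq : B - cb*A = d := by rw [hddef, hcbdef]; ring
    have hfac2' : (ψ - cx*σ)^2 + (PU - 2*cx*PG + cx^2*G) = ψ^2 + PU - cx*m := by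
      linear_combination -2*cx*h1 - cx^2*hSdef + cx*hcx
    have heeq : e = L^2 - cx*m := by
      rw [hedef, hcxdef]; ring
    have hfac2 : (ψ - cx*σ)^2 + (PU - 2*cx*PG + cx^2*G) ≤ e := by
      rw [hfac2', heeq]; linarith
    rw [hinner, hfac1, hdeq] at cs
    have hT2 : (z*ψ + Y - cb*m)^2 ≤ d*e :=
      cs.trans (mul_le_mul_of_nonneg_left hfac2 hd')
    have habs : |z*ψ + Y - cb*m| ≤ Real.sqrt (d*e) := by
      rw [← Real.sqrt_sq_eq_abs]; exact Real.sqrt_le_sqrt hT2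
    have hsq : Real.sqrt (d*e) = Real.sqrt d * Real.sqrt e := Real.sqrt_mul hd' e
    have h5 : -(Real.sqrt d * Real.sqrt e) ≤ z*ψ + Y - cb*m := by
      rw [← hsq]
      have := neg_abs_le (z*ψ + Y - cb*m)
      linarith
    have hc : Real.sqrt e * Real.sqrt d = Real.sqrt d * Real.sqrt e := mul_comm _ _
    show cb * m - Real.sqrt e * Real.sqrt d ≤ z*ψ + Y
    linarith
end

section
/- Fix an index i with λᵢ > 0 and γᵢ ≠ 0, and suppose the condition 2·((σ² + Σ_{j≠i}γⱼ²λⱼ)/δ²)·(L² − θ²) + 2·(γᵢ²λᵢ/δ²)·θ² < λᵢ holds, where δ² = σ² + Σⱼγⱼ²λⱼ > 0 and 0 ≤ θ ≤ L. Then for any z, u, u' ∈ ℝ × ℝⁿ × ℝⁿ differing only in the i-th jump component (uⱼ = u'ⱼ for j ≠ i, uᵢ ≠ u'ᵢ), the quantity Γᵢ defined by Γᵢ = (γᵢθ/δ)(uᵢ−u'ᵢ)λᵢ − √(L²−θ²)·[√(Qᵢ(u)) − √(Qᵢ(u'))], where Qᵢ(v) = |π̃(v)σ − z|² + Σⱼ|π̃(v)γⱼ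 − vⱼ|²λⱼ and π̃(v) = (zσ + Σⱼvⱼγⱼλⱼ)/δ², satisfies |Γᵢ| < |uᵢ − u'ᵢ|·λᵢ. -/
open Finset Real

-- weighted Cauchy-Schwarz
lemma cs_weighted {n : ℕ} (a b w : Fin n → ℝ) (hw : ∀ j, 0 ≤ w j) :
    (∑ j, a j * b j * w j)^2 ≤ (∑ j, (a j)^2 * w j) * (∑ j, (b j)^2 * w j) := by
  have h := Finset.sum_mul_sq_le_sq_mul_sq Finset.univ
      (fun j => a j * Real.sqrt (w j)) (fun j => b j * Real.sqrt (w j))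
  have e1 : ∀ j : Fin n, (a j * Real.sqrt (w j)) * (b j * Real.sqrt (w j)) = a j * b j * w j := by
    intro j
    have hs : Real.sqrt (w j) * Real.sqrt (w j) = w j := Real.mul_self_sqrt (hw j)
    calc (a j * Real.sqrt (w j)) * (b j * Real.sqrt (w j))
        = a j * b j * (Real.sqrt (w j) * Real.sqrt (w j)) := by ring
      _ = a j * b j * w j := by rw [hs]
  have e2 : ∀ (c : Fin n → ℝ) (j : Fin n), (c j * Real.sqrt (w j))^2 = (c j)^2 * w j := by
    intro c j
    rw [mul_pow, Real.sq_sqrt (hw j)]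
  calc (∑ j, a j * b j * w j)^2
      = (∑ j, (a j * Real.sqrt (w j)) * (b j * Real.sqrt (w j)))^2 := by
        rw [Finset.sum_congr rfl (fun j _ => e1 j)]
    _ ≤ (∑ j, (a j * Real.sqrt (w j))^2) * (∑ j, (b j * Real.sqrt (w j))^2) := h
    _ = (∑ j, (a j)^2 * w j) * (∑ j, (b j)^2 * w j) := by
        rw [Finset.sum_congr rfl (fun j _ => e2 a j), Finset.sum_congr rfl (fun j _ => e2 b j)]

-- sqrt difference bound
lemma sqrt_diff_sq_le (x y A B S : ℝ) (hA : 0 ≤ A) (hB : 0 ≤ B) (hS : S^2 ≤ A * B) :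
    (Real.sqrt (x^2 + A) - Real.sqrt (y^2 + B))^2 ≤ (x - y)^2 + (A + B - 2*S) := by
  have hP0 : (0:ℝ) ≤ x^2 + A := by positivity
  have hR0 : (0:ℝ) ≤ y^2 + B := by positivity
  have hP2 : (Real.sqrt (x^2 + A))^2 = x^2 + A := Real.sq_sqrt hP0
  have hR2 : (Real.sqrt (y^2 + B))^2 = y^2 + B := Real.sq_sqrt hR0
  -- S ≤ √A √B
  have hSle : S ≤ Real.sqrt A * Real.sqrt B := by
    have h1 : S ≤ |S| := le_abs_self S
    have h2 : |S| = Real.sqrt (S^2) := (Real.sqrt_sq_eq_abs S).symm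
    have h3 : Real.sqrt (S^2) ≤ Real.sqrt (A*B) := Real.sqrt_le_sqrt hS
    rw [Real.sqrt_mul hA] at h3
    linarith [h1, h2 ▸ h3]
  -- xy + S ≤ √(x²+A)√(y²+B)
  have key : x*y + S ≤ Real.sqrt (x^2+A) * Real.sqrt (y^2+B) := by
    have hstep : x*y + S ≤ abs x * abs y + Real.sqrt A * Real.sqrt B := by
      have : x*y ≤ abs x * abs y := by rw [← abs_mul]; exact le_abs_self _
      linarith
    have hsq : (abs x * abs y + Real.sqrt A * Real.sqrt B)^2 ≤ (x^2+A)*(y^2+B) := by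
      have hA2 : (Real.sqrt A)^2 = A := Real.sq_sqrt hA
      have hB2 : (Real.sqrt B)^2 = B := Real.sq_sqrt hB
      have hx2 : (abs x)^2 = x^2 := sq_abs x
      have hy2 : (abs y)^2 = y^2 := sq_abs y
      nlinarith [sq_nonneg (abs x * Real.sqrt B - abs y * Real.sqrt A)]
    have hnn : 0 ≤ abs x * abs y + Real.sqrt A * Real.sqrt B := by positivity
    calc x*y + S ≤ abs x * abs y + Real.sqrt A * Real.sqrt B := hstep
      _ = Real.sqrt ((abs x * abs y + Real.sqrt A * Real.sqrt B)^2) := (Real.sqrt_sq hnn).symm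
      _ ≤ Real.sqrt ((x^2+A)*(y^2+B)) := Real.sqrt_le_sqrt hsq
      _ = Real.sqrt (x^2+A) * Real.sqrt (y^2+B) := Real.sqrt_mul hP0 _
  have expand : (Real.sqrt (x^2+A) - Real.sqrt (y^2+B))^2
      = (x^2+A) + (y^2+B) - 2*(Real.sqrt (x^2+A) * Real.sqrt (y^2+B)) := by
    have : (Real.sqrt (x^2+A) - Real.sqrt (y^2+B))^2
        = (Real.sqrt (x^2+A))^2 + (Real.sqrt (y^2+B))^2
          - 2*(Real.sqrt (x^2+A) * Real.sqrt (y^2+B)) := by ring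
    rw [this, hP2, hR2]
  linarith [key, expand]

lemma alg1 (d g l e s z Δ : ℝ) (hd : d ≠ 0) (hde : d = s^2 + (g^2*l + e)) :
    (Δ * g * l / d * s)^2 + ((Δ * g * l / d * g - Δ)^2 * l + (Δ * g * l / d)^2 * e)
      = Δ^2 * (l * (1 - g^2 * l / d)) := by
  set k := Δ * g * l / d with hkdef
  have hk : k * d = Δ * g * l := by rw [hkdef]; field_simp
  have hr : Δ^2*(l*(1 - g^2*l/d)) = Δ^2*l - k*(Δ*g*l) := by
    rw [hkdef]; field_simp
  rw [hr]
  linear_combination k * hk - k^2 * hde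

lemma two_sq (a b : ℝ) : (a - b)^2 ≤ 2*a^2 + 2*b^2 := by nlinarith [sq_nonneg (a+b)]
set_option maxHeartbeats 1000000 in
theorem stmt_13 (n : ℕ) (σ θ L z : ℝ) (γ lam : Fin n → ℝ) (i : Fin n)
    (hlam : ∀ j, 0 ≤ lam j)
    (hδ : 0 < σ^2 + ∑ j, (γ j)^2 * lam j)
    (hθ : 0 ≤ θ) (hθL : θ ≤ L)
    (hli : 0 < lam i) (hγi : γ i ≠ 0)
    (hcond : 2 * ((σ^2 + ∑ j ∈ Finset.univ.erase i, (γ j)^2 * lam j)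
        / (σ^2 + ∑ j, (γ j)^2 * lam j)) * (L^2 - θ^2)
      + 2 * ((γ i)^2 * lam i / (σ^2 + ∑ j, (γ j)^2 * lam j)) * θ^2 < lam i)
    (u u' : Fin n → ℝ)
    (huj : ∀ j, j ≠ i → u j = u' j) (hui : u i ≠ u' i) :
    let δ2 := σ^2 + ∑ j, (γ j)^2 * lam j
    let δ := Real.sqrt δ2
    let πt : (Fin n → ℝ) → ℝ := fun v => (z*σ + ∑ j, v j * γ j * lam j)/δ2
    let Q : (Fin n → ℝ) → ℝ := fun v =>
      (πt v * σ - z)^2 + ∑ j, (πt v * γ j - v j)^2 * lam j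
    |γ i * θ / δ * ((u i - u' i) * lam i)
        - Real.sqrt (L^2 - θ^2) * (Real.sqrt (Q u) - Real.sqrt (Q u'))|
      < |u i - u' i| * lam i := by
  intro δ2 δ πt Q
  have hD0 : 0 < δ2 := hδ
  have hDne : δ2 ≠ 0 := ne_of_gt hD0
  have hd0 : 0 < δ := Real.sqrt_pos.mpr hD0
  have hd2 : δ^2 = δ2 := Real.sq_sqrt hD0.le
  set E := ∑ j ∈ Finset.univ.erase i, (γ j)^2 * lam j with hEdef
  have hE : (γ i)^2 * lam i + E = ∑ j, (γ j)^2 * lam j := by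
    rw [hEdef]
    exact Finset.add_sum_erase Finset.univ (fun j => (γ j)^2 * lam j) (Finset.mem_univ i)
  have hE0 : 0 ≤ E :=
    Finset.sum_nonneg (fun j _ => mul_nonneg (sq_nonneg _) (hlam j))
  have hδ2E : δ2 = σ^2 + ((γ i)^2 * lam i + E) := by
    show σ^2 + ∑ j, (γ j)^2 * lam j = _
    rw [hE]
  set Δ := u i - u' i with hΔdef
  have hΔ0 : Δ ≠ 0 := sub_ne_zero.mpr hui
  set p := πt u with hp
  set p' := πt u' with hp'
  -- difference of the projections
  have hpdiff : p - p' = Δ * γ i * lam i / δ2 := by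
    have hsum : (∑ j, u j * γ j * lam j) - (∑ j, u' j * γ j * lam j)
        = Δ * γ i * lam i := by
      rw [← Finset.sum_sub_distrib]
      rw [Finset.sum_eq_single i (fun j _ hj => by rw [huj j hj]; ring)
        (fun h => absurd (Finset.mem_univ i) h)]
      rw [hΔdef]; ring
    show (z*σ + ∑ j, u j * γ j * lam j)/δ2 - (z*σ + ∑ j, u' j * γ j * lam j)/δ2 = _
    rw [div_sub_div_same, ← hsum]; ring
  -- abbreviations
  set A := ∑ j, (p * γ j - u j)^2 * lam j with hA
  set B := ∑ j, (p' * γ j - u' j)^2 * lam j with hB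
  set S := ∑ j, (p * γ j - u j) * (p' * γ j - u' j) * lam j with hS
  have hA0 : 0 ≤ A :=
    Finset.sum_nonneg (fun j _ => mul_nonneg (sq_nonneg _) (hlam j))
  have hB0 : 0 ≤ B :=
    Finset.sum_nonneg (fun j _ => mul_nonneg (sq_nonneg _) (hlam j))
  have hS2 : S^2 ≤ A * B :=
    cs_weighted (fun j => p * γ j - u j) (fun j => p' * γ j - u' j) lam hlam
  have hQu : Q u = (p * σ - z)^2 + A := rfl
  have hQu' : Q u' = (p' * σ - z)^2 + B := rfl
  -- the sqrt difference bound
  have hsqrt : (Real.sqrt (Q u) - Real.sqrt (Q u'))^2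
      ≤ ((p*σ - z) - (p'*σ - z))^2 + (A + B - 2*S) := by
    rw [hQu, hQu']
    exact sqrt_diff_sq_le _ _ _ _ _ hA0 hB0 hS2
  -- identify A + B - 2S with the weighted square sum of differences
  have hABS : A + B - 2*S
      = ∑ j, ((p * γ j - u j) - (p' * γ j - u' j))^2 * lam j := by
    rw [hA, hB, hS, ← Finset.sum_add_distrib, Finset.mul_sum, ← Finset.sum_sub_distrib]
    exact Finset.sum_congr rfl (fun j _ => by ring)
  -- evaluate the square sum
  set c := (γ i)^2 * lam i / δ2 with hc
  have hCval : ((p*σ - z) - (p'*σ - z))^2 + (A + B - 2*S)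
      = Δ^2 * (lam i * (1 - c)) := by
    rw [hABS]
    have hsplit : ∑ j, ((p * γ j - u j) - (p' * γ j - u' j))^2 * lam j
        = ((p - p') * γ i - Δ)^2 * lam i
          + ∑ j ∈ Finset.univ.erase i, ((p - p') * γ j)^2 * lam j := by
      rw [← Finset.add_sum_erase _ _ (Finset.mem_univ i)]
      congr 1
      · ring
      · exact Finset.sum_congr rfl (fun j hj => by
          rw [huj j (Finset.ne_of_mem_erase hj)]; ring)
    have hsum2 : ∑ j ∈ Finset.univ.erase i, ((p - p') * γ j)^2 * lam j
        = (p - p')^2 * E := by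
      rw [hEdef, Finset.mul_sum]
      exact Finset.sum_congr rfl (fun j _ => by ring)
    rw [hsplit, hsum2]
    have hx : ((p*σ - z) - (p'*σ - z)) = (p - p') * σ := by ring
    rw [hx, hpdiff, hc]
    exact alg1 δ2 (γ i) (lam i) E σ z Δ hDne hδ2E
  have hR2 : (Real.sqrt (Q u) - Real.sqrt (Q u'))^2 ≤ Δ^2 * (lam i * (1 - c)) := by
    rw [← hCval]; exact hsqrt
  -- square root of L² - θ²
  have hK0 : 0 ≤ L^2 - θ^2 := sub_nonneg.mpr (pow_le_pow_left₀ hθ hθL 2)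
  have hT2 : (Real.sqrt (L^2 - θ^2))^2 = L^2 - θ^2 := Real.sq_sqrt hK0
  set R := Real.sqrt (Q u) - Real.sqrt (Q u') with hRdef
  set T := Real.sqrt (L^2 - θ^2) with hT
  -- the first term squared
  have ha2 : (γ i * θ / δ * (Δ * lam i))^2 = c * θ^2 * (Δ^2 * lam i) := by
    have h1 : (γ i * θ / δ * (Δ * lam i))^2
        = (γ i)^2 * θ^2 * Δ^2 * lam i^2 / δ^2 := by ring
    rw [h1, hd2, hc]
    field_simp
  have hb2 : (T * R)^2 ≤ (L^2 - θ^2) * (Δ^2 * (lam i * (1 - c))) := by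
    rw [mul_pow, hT2]
    exact mul_le_mul_of_nonneg_left hR2 hK0
  set G := γ i * θ / δ * (Δ * lam i) - T * R with hG
  have hG2 : G^2 ≤ 2 * (c * θ^2 * (Δ^2 * lam i))
      + 2 * ((L^2 - θ^2) * (Δ^2 * (lam i * (1 - c)))) := by
    calc G^2 ≤ 2 * (γ i * θ / δ * (Δ * lam i))^2 + 2 * (T * R)^2 := by
          rw [hG]; exact two_sq _ _
      _ ≤ 2 * (c * θ^2 * (Δ^2 * lam i))
          + 2 * ((L^2 - θ^2) * (Δ^2 * (lam i * (1 - c)))) := by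
          rw [ha2]
          exact add_le_add le_rfl
            (mul_le_mul_of_nonneg_left hb2 (by norm_num))
  -- rewrite the condition
  have hfrac : (σ^2 + E) / δ2 = 1 - c := by
    rw [hc, eq_sub_iff_add_eq, ← add_div, div_eq_one_iff_eq hDne]
    linear_combination hE
  have hcond' : 2 * (1 - c) * (L^2 - θ^2) + 2 * c * θ^2 < lam i := by
    have : 2 * ((σ^2 + E)/δ2) * (L^2 - θ^2) + 2 * c * θ^2 < lam i := hcond
    rwa [hfrac] at this
  have hΔsq : 0 < Δ^2 := lt_of_le_of_ne (sq_nonneg Δ) (Ne.symm (pow_ne_zero 2 hΔ0))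
  have hpos : 0 < Δ^2 * lam i := mul_pos hΔsq hli
  have hfinal : G^2 < (|Δ| * lam i)^2 := by
    have habs : (|Δ| * lam i)^2 = Δ^2 * lam i^2 := by rw [mul_pow, sq_abs]
    have hm := mul_lt_mul_of_pos_left hcond' hpos
    rw [habs]
    calc G^2 ≤ 2 * (c * θ^2 * (Δ^2 * lam i))
          + 2 * ((L^2 - θ^2) * (Δ^2 * (lam i * (1 - c)))) := hG2
      _ = Δ^2 * lam i * (2 * (1 - c) * (L^2 - θ^2) + 2 * c * θ^2) := by ring
      _ < Δ^2 * lam i * lam i := hm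
      _ = Δ^2 * lam i^2 := by ring
  calc |G| = Real.sqrt (G^2) := (Real.sqrt_sq_eq_abs G).symm
    _ < Real.sqrt ((|Δ| * lam i)^2) := Real.sqrt_lt_sqrt (sq_nonneg G) hfinal
    _ = |Δ| * lam i := Real.sqrt_sq (by positivity)
end

section
/- Fix an index i with λᵢ > 0 and γᵢ = 0, and suppose ((σ² + Σ_{j≠i}γⱼ²λⱼ)/δ²)·(L² − θ²) < λᵢ with δ² = σ² + Σⱼγⱼ²λⱼ > 0 and 0 ≤ θ ≤ L. Then for u, u' differing only in coordinate i, |√(L²−θ²)·(√(Qᵢ(u)) − √(Qᵢ(u')))| < |uᵢ − u'ᵢ|·λᵢ, where Qᵢ(v) = z² + Σⱼ vⱼ²λⱼ − (zσ + Σⱼvⱼγⱼλⱼ)²/δ². -/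
lemma aux_cs (a b T A B : ℝ) (hA : 0 ≤ A) (hB : 0 ≤ B) (hT : T^2 ≤ A*B) :
    (a*b+T)^2 ≤ (a^2+A)*(b^2+B) := by
  rcases eq_or_lt_of_le hB with h0 | hBpos
  · have hT0 : T = 0 := by nlinarith [sq_nonneg T]
    subst hT0
    nlinarith [sq_nonneg b, mul_nonneg hA (sq_nonneg b)]
  · have h2 : 2*(a*b*T)*B ≤ (a^2*B + b^2*A)*B := by
      nlinarith [sq_nonneg (a*B - b*T), mul_le_mul_of_nonneg_left hT (sq_nonneg b)]
    have h3 : 2*(a*b*T) ≤ a^2*B + b^2*A := le_of_mul_le_mul_right h2 hBpos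
    nlinarith [hT]

theorem stmt_14 (n : ℕ) (σ θ L z : ℝ) (γ lam : Fin n → ℝ) (i : Fin n)
    (hlam : ∀ j, 0 ≤ lam j)
    (hδ : 0 < σ^2 + ∑ j, (γ j)^2 * lam j)
    (hθ : 0 ≤ θ) (hθL : θ ≤ L)
    (hli : 0 < lam i) (hγi : γ i = 0)
    (hcond : ((σ^2 + ∑ j ∈ Finset.univ.erase i, (γ j)^2 * lam j)
        / (σ^2 + ∑ j, (γ j)^2 * lam j)) * (L^2 - θ^2) < lam i)
    (u u' : Fin n → ℝ)
    (huj : ∀ j, j ≠ i → u j = u' j) (hui : u i ≠ u' i) :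
    let δ2 := σ^2 + ∑ j, (γ j)^2 * lam j
    let Q : (Fin n → ℝ) → ℝ := fun v =>
      z^2 + ∑ j, (v j)^2 * lam j - (z*σ + ∑ j, v j * γ j * lam j)^2/δ2
    |Real.sqrt (L^2 - θ^2) * (Real.sqrt (Q u) - Real.sqrt (Q u'))|
      < |u i - u' i| * lam i := by
  intro δ2 Q
  set s := Finset.univ.erase i with hs
  have hγsum : ∑ j ∈ s, (γ j)^2 * lam j = ∑ j, (γ j)^2 * lam j := by
    rw [← Finset.add_sum_erase _ _ (Finset.mem_univ i), hγi]
    ring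
  -- condition simplifies to L^2 - θ^2 < lam i
  have hmlt : L^2 - θ^2 < lam i := by
    rw [hγsum, div_self (ne_of_gt hδ), one_mul] at hcond
    exact hcond
  have hm0 : 0 ≤ L^2 - θ^2 := by nlinarith
  -- Q v ≥ (v i)^2 * lam i
  have hQ : ∀ v : Fin n → ℝ, (v i)^2 * lam i ≤ Q v := by
    intro v
    have hsplit1 : ∑ j, (v j)^2 * lam j = (v i)^2 * lam i + ∑ j ∈ s, (v j)^2 * lam j :=
      (Finset.add_sum_erase _ _ (Finset.mem_univ i)).symm
    have hsplit2 : ∑ j, v j * γ j * lam j = ∑ j ∈ s, v j * γ j * lam j := by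
      rw [← Finset.add_sum_erase _ _ (Finset.mem_univ i), hγi]
      ring
    have cs : (∑ j ∈ s, (γ j * Real.sqrt (lam j)) * (v j * Real.sqrt (lam j)))^2
        ≤ (∑ j ∈ s, (γ j * Real.sqrt (lam j))^2) * (∑ j ∈ s, (v j * Real.sqrt (lam j))^2) :=
      Finset.sum_mul_sq_le_sq_mul_sq s _ _
    have hfg : ∀ (w : Fin n → ℝ) (j : Fin n), (w j * Real.sqrt (lam j))^2 = (w j)^2 * lam j := by
      intro w j
      rw [mul_pow, Real.sq_sqrt (hlam j)]
    have hT : ∀ j : Fin n, (γ j * Real.sqrt (lam j)) * (v j * Real.sqrt (lam j))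
        = v j * γ j * lam j := by
      intro j
      linear_combination γ j * v j * Real.mul_self_sqrt (hlam j)
    simp only [hfg, hT] at cs
    have key := aux_cs σ z (∑ j ∈ s, v j * γ j * lam j)
      (∑ j ∈ s, (γ j)^2 * lam j) (∑ j ∈ s, (v j)^2 * lam j)
      (Finset.sum_nonneg fun j _ => mul_nonneg (sq_nonneg _) (hlam j))
      (Finset.sum_nonneg fun j _ => mul_nonneg (sq_nonneg _) (hlam j)) cs
    rw [hγsum] at key
    have hdiv : (z*σ + ∑ j, v j * γ j * lam j)^2 / δ2
        ≤ z^2 + ∑ j ∈ s, (v j)^2 * lam j := by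
      rw [div_le_iff₀ hδ, hsplit2]
      calc (z*σ + ∑ j ∈ s, v j * γ j * lam j)^2
          = (σ*z + ∑ j ∈ s, v j * γ j * lam j)^2 := by ring
        _ ≤ (σ^2 + ∑ j, (γ j)^2 * lam j) * (z^2 + ∑ j ∈ s, (v j)^2 * lam j) := key
        _ = (z^2 + ∑ j ∈ s, (v j)^2 * lam j) * (σ^2 + ∑ j, (γ j)^2 * lam j) := by ring
    have : Q v = z^2 + ∑ j, (v j)^2 * lam j - (z*σ + ∑ j, v j * γ j * lam j)^2/δ2 := rfl
    rw [this, hsplit1]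
    linarith
  -- Q u - Q u' = (u i ^2 - u' i ^2) * lam i
  have hQdiff : Q u - Q u' = ((u i)^2 - (u' i)^2) * lam i := by
    have e1 : ∀ v : Fin n → ℝ, ∑ j, (v j)^2 * lam j = (v i)^2 * lam i + ∑ j ∈ s, (v j)^2 * lam j :=
      fun v => (Finset.add_sum_erase _ _ (Finset.mem_univ i)).symm
    have e2 : ∑ j ∈ s, (u j)^2 * lam j = ∑ j ∈ s, (u' j)^2 * lam j := by
      refine Finset.sum_congr rfl fun j hj => ?_
      rw [huj j (Finset.ne_of_mem_erase hj)]
    have e3 : ∑ j, u j * γ j * lam j = ∑ j, u' j * γ j * lam j := by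
      refine Finset.sum_congr rfl fun j _ => ?_
      by_cases hji : j = i
      · subst hji; rw [hγi]; ring
      · rw [huj j hji]
    show z^2 + ∑ j, (u j)^2 * lam j - (z*σ + ∑ j, u j * γ j * lam j)^2/δ2
        - (z^2 + ∑ j, (u' j)^2 * lam j - (z*σ + ∑ j, u' j * γ j * lam j)^2/δ2)
        = ((u i)^2 - (u' i)^2) * lam i
    rw [e3, e1 u, e1 u', e2]
    ring
  -- final arithmetic
  have hQu0 : 0 ≤ Q u := le_trans (mul_nonneg (sq_nonneg _) hli.le) (hQ u)
  have hQu'0 : 0 ≤ Q u' := le_trans (mul_nonneg (sq_nonneg _) hli.le) (hQ u')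
  set sa := Real.sqrt (Q u) with hsa
  set sb := Real.sqrt (Q u') with hsb
  have hsa0 : 0 ≤ sa := Real.sqrt_nonneg _
  have hsb0 : 0 ≤ sb := Real.sqrt_nonneg _
  have hsai : |u i| * Real.sqrt (lam i) ≤ sa := by
    have : Real.sqrt ((u i)^2 * lam i) ≤ sa := Real.sqrt_le_sqrt (hQ u)
    rwa [Real.sqrt_mul (sq_nonneg _), Real.sqrt_sq_eq_abs] at this
  have hsbi : |u' i| * Real.sqrt (lam i) ≤ sb := by
    have : Real.sqrt ((u' i)^2 * lam i) ≤ sb := Real.sqrt_le_sqrt (hQ u')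
    rwa [Real.sqrt_mul (sq_nonneg _), Real.sqrt_sq_eq_abs] at this
  have hd : 0 < |u i - u' i| := abs_pos.mpr (sub_ne_zero.mpr hui)
  have hkey : |sa - sb| ≤ |u i - u' i| * Real.sqrt (lam i) := by
    rcases eq_or_lt_of_le (add_nonneg hsa0 hsb0) with h0 | hpos
    · have h1 : sa = 0 := by linarith [abs_nonneg sa]
      have h2 : sb = 0 := by linarith
      rw [h1, h2, sub_zero, abs_zero]
      positivity
    · rw [← mul_le_mul_iff_of_pos_right hpos]
      have lhs_eq : |sa - sb| * (sa + sb) = |Q u - Q u'| := by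
        rw [← abs_of_nonneg (le_of_lt hpos), ← abs_mul]
        congr 1
        have := Real.sq_sqrt hQu0
        have := Real.sq_sqrt hQu'0
        nlinarith [Real.sq_sqrt hQu0, Real.sq_sqrt hQu'0]
      rw [lhs_eq, hQdiff]
      have : |((u i)^2 - (u' i)^2) * lam i| = |u i - u' i| * |u i + u' i| * lam i := by
        rw [abs_mul, abs_of_nonneg hli.le]
        congr 1
        rw [← abs_mul]
        congr 1
        ring
      rw [this]
      have h1 : |u i + u' i| * Real.sqrt (lam i) ≤ sa + sb := by
        calc |u i + u' i| * Real.sqrt (lam i)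
            ≤ (|u i| + |u' i|) * Real.sqrt (lam i) := by
              apply mul_le_mul_of_nonneg_right (abs_add_le _ _) (Real.sqrt_nonneg _)
          _ = |u i| * Real.sqrt (lam i) + |u' i| * Real.sqrt (lam i) := by ring
          _ ≤ sa + sb := add_le_add hsai hsbi
      have hlami : lam i = Real.sqrt (lam i) * Real.sqrt (lam i) := by
        rw [Real.mul_self_sqrt hli.le]
      calc |u i - u' i| * |u i + u' i| * lam i
          = |u i - u' i| * Real.sqrt (lam i) * (|u i + u' i| * Real.sqrt (lam i)) := by
            linear_combination |u i - u' i| * |u i + u' i| * hlami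
        _ ≤ |u i - u' i| * Real.sqrt (lam i) * (sa + sb) :=
            mul_le_mul_of_nonneg_left h1 (by positivity)
  have hsqrtlt : Real.sqrt (L^2 - θ^2) * Real.sqrt (lam i) < lam i := by
    have h1 : Real.sqrt (L^2 - θ^2) < Real.sqrt (lam i) :=
      Real.sqrt_lt_sqrt hm0 hmlt
    have h2 : 0 < Real.sqrt (lam i) := Real.sqrt_pos.mpr hli
    calc Real.sqrt (L^2 - θ^2) * Real.sqrt (lam i)
        < Real.sqrt (lam i) * Real.sqrt (lam i) := by
          exact mul_lt_mul_of_pos_right h1 h2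
      _ = lam i := Real.mul_self_sqrt hli.le
  calc |Real.sqrt (L^2 - θ^2) * (sa - sb)|
      = Real.sqrt (L^2 - θ^2) * |sa - sb| := by
        rw [abs_mul, abs_of_nonneg (Real.sqrt_nonneg _)]
    _ ≤ Real.sqrt (L^2 - θ^2) * (|u i - u' i| * Real.sqrt (lam i)) :=
        mul_le_mul_of_nonneg_left hkey (Real.sqrt_nonneg _)
    _ = (Real.sqrt (L^2 - θ^2) * Real.sqrt (lam i)) * |u i - u' i| := by ring
    _ < lam i * |u i - u' i| := mul_lt_mul_of_pos_right hsqrtlt hd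
    _ = |u i - u' i| * lam i := mul_comm _ _
end

section
/- Let δ² = σ² + Σᵢγᵢ²λᵢ > 0, 0 ≤ θ = (μ−r)/δ < L, and z ∈ ℝ, u ∈ ℝⁿ with R := z² + Σᵢuᵢ²λᵢ − (zσ+Σᵢuᵢγᵢλᵢ)²/δ² > 0. Define π* = (zσ+Σᵢuᵢγᵢλᵢ)/δ² + (θ/(δ√(L²−θ²)))·√R. Then the instantaneous Sharpe ratio of the surplus at π* equals L: [π*(μ−r) − f*] / √(|π*σ−z|² + Σᵢ|π*γᵢ−uᵢ|²λᵢ) = L, where f* = ((zσ+Σᵢuᵢγᵢλᵢ)/δ)θ − √(L²−θ²)·√R. -/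
theorem stmt_17 (n : ℕ) (σ z μ r L : ℝ) (γ u lam : Fin n → ℝ)
    (hlam : ∀ i, 0 ≤ lam i)
    (hδ : 0 < σ^2 + ∑ i, (γ i)^2 * lam i)
    (hθ : 0 ≤ (μ - r) / Real.sqrt (σ^2 + ∑ i, (γ i)^2 * lam i))
    (hL : (μ - r) / Real.sqrt (σ^2 + ∑ i, (γ i)^2 * lam i) < L)
    (hR : 0 < z^2 + ∑ i, (u i)^2 * lam i
      - (z*σ + ∑ i, u i * γ i * lam i)^2/(σ^2 + ∑ i, (γ i)^2 * lam i)) :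
    let δ2 := σ^2 + ∑ i, (γ i)^2 * lam i
    let δ := Real.sqrt δ2
    let θ := (μ - r) / δ
    let R := z^2 + ∑ i, (u i)^2 * lam i - (z*σ + ∑ i, u i * γ i * lam i)^2/δ2
    let πs := (z*σ + ∑ i, u i * γ i * lam i)/δ2
      + θ / (δ * Real.sqrt (L^2 - θ^2)) * Real.sqrt R
    let f := (z*σ + ∑ i, u i * γ i * lam i)/δ * θ - Real.sqrt (L^2 - θ^2) * Real.sqrt R
    (πs * (μ - r) - f)
        / Real.sqrt ((πs * σ - z)^2 + ∑ i, (πs * γ i - u i)^2 * lam i) = L := by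
  intro δ2 δ θ R πs f
  have hδ2def : δ2 = σ^2 + ∑ i, (γ i)^2 * lam i := rfl
  have hδ2 : (0:ℝ) < δ2 := hδ
  have hs : 0 < δ := Real.sqrt_pos.2 hδ2
  have hs2 : δ^2 = δ2 := Real.sq_sqrt hδ2.le
  have hθdef : θ = (μ - r) / δ := rfl
  have hθ0 : 0 ≤ θ := hθ
  have hθL : θ < L := hL
  have hL0 : 0 < L := lt_of_le_of_lt hθ0 hθL
  have hK : 0 < L^2 - θ^2 := by nlinarith
  have hq : 0 < Real.sqrt (L^2 - θ^2) := Real.sqrt_pos.2 hK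
  have hq2 : (Real.sqrt (L^2 - θ^2))^2 = L^2 - θ^2 := Real.sq_sqrt hK.le
  set q := Real.sqrt (L^2 - θ^2) with hqdef
  have hRpos : (0:ℝ) < R := hR
  have hρ : 0 < Real.sqrt R := Real.sqrt_pos.2 hRpos
  have hρ2 : (Real.sqrt R)^2 = R := Real.sq_sqrt hRpos.le
  set ρ := Real.sqrt R with hρdef
  set A := z*σ + ∑ i, u i * γ i * lam i with hA
  have hπ : πs = A/δ2 + θ/(δ*q)*ρ := rfl
  have hf : f = A/δ * θ - q * ρ := rfl
  have hRdef : R = z^2 + ∑ i, (u i)^2 * lam i - A^2/δ2 := rfl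
  have hμ : μ - r = θ * δ := by rw [hθdef]; field_simp
  have hsum : (πs*σ - z)^2 + ∑ i, (πs*γ i - u i)^2*lam i
      = δ2*(πs - A/δ2)^2 + R := by
    have h1 : ∀ i ∈ Finset.univ, (πs*γ i - u i)^2*lam i
        = πs^2*((γ i)^2*lam i) - 2*πs*(u i*γ i*lam i) + (u i)^2*lam i := by
      intros; ring
    rw [Finset.sum_congr rfl h1, Finset.sum_add_distrib, Finset.sum_sub_distrib,
      ← Finset.mul_sum, ← Finset.mul_sum, hRdef, hδ2def, hA]
    have hne : σ^2 + ∑ i, (γ i)^2 * lam i ≠ 0 := hδ2.ne'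
    field_simp
    ring
  have h2 : πs - A/δ2 = θ/(δ*q)*ρ := by rw [hπ]; ring
  have h3 : δ2*(πs - A/δ2)^2 + R = (L*ρ/q)^2 := by
    rw [h2, ← hs2, ← hρ2]
    field_simp
    linear_combination hq2
  have hnum : πs*(μ-r) - f = L^2*ρ/q := by
    rw [hμ, hπ, hf, ← hs2]
    field_simp
    linear_combination δ*ρ * hq2
  rw [hnum, hsum, h3, Real.sqrt_sq (by positivity)]
  field_simp
end

section
/- Under the assumptions δ² > 0, μ > r, L > θ = (μ−r)/δ and R := z² + Σᵢuᵢ²λᵢ − (zσ+Σᵢuᵢγᵢλᵢ)²/δ² > 0, the minimum value of h(π) = L√(|πσ−z|²+Σᵢ|πγᵢ−uᵢ|²λᵢ) − π(μ−r) over π ∈ ℝ equals √(L²−θ²)·√R − π̃(μ−r), where π̃ = (zσ+Σᵢuᵢγᵢλᵢ)/δ². -/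
lemma key19 (S R a L : ℝ) (hS : 0 < S) (hR : 0 < R) (ha : 0 < a)
    (hL : a / Real.sqrt S < L) :
    IsLeast (Set.range fun x : ℝ => L * Real.sqrt (S*x^2 + R) - a*x)
      (Real.sqrt (L^2 - (a/Real.sqrt S)^2) * Real.sqrt R) := by
  set d := Real.sqrt S with hdd
  have hd : 0 < d := Real.sqrt_pos.2 hS
  have hd2 : d^2 = S := Real.sq_sqrt hS.le
  have hLpos : 0 < L := lt_trans (div_pos ha hd) hL
  have hL' : a < L * d := by
    have := (div_lt_iff₀ hd).1 hL; linarith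
  have hc2pos : 0 < L^2*S - a^2 := by nlinarith
  set c := Real.sqrt (L^2*S - a^2) with hcc
  have hc : 0 < c := Real.sqrt_pos.2 hc2pos
  have hc2 : c^2 = L^2*S - a^2 := Real.sq_sqrt hc2pos.le
  have hrpos : 0 < Real.sqrt R := Real.sqrt_pos.2 hR
  have hr2 : (Real.sqrt R)^2 = R := Real.sq_sqrt hR.le
  have hθ : Real.sqrt (L^2 - (a/d)^2) = c / d := by
    have h1 : L^2 - (a/d)^2 = (L^2*S - a^2)/d^2 := by
      field_simp
      nlinarith [hd2]
    rw [h1, Real.sqrt_div hc2pos.le, Real.sqrt_sq hd.le]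
  have hid : ∀ x : ℝ, (L*d*Real.sqrt (S*x^2+R))^2 - (c*Real.sqrt R + a*d*x)^2
      = (c*d*x - a*Real.sqrt R)^2 := by
    intro x
    have hs2 : (Real.sqrt (S*x^2+R))^2 = S*x^2+R := Real.sq_sqrt (by positivity)
    linear_combination (L^2*d^2)*hs2 + (L^2*S*x^2 + L^2*R - a^2*x^2 - c^2*x^2)*hd2
      + (-c^2 - a^2)*hr2 + (-S*x^2 - R)*hc2
  have main : ∀ x : ℝ, c * Real.sqrt R + a*d*x ≤ L*d*Real.sqrt (S*x^2+R) := by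
    intro x
    have hs0 : 0 ≤ Real.sqrt (S*x^2+R) := Real.sqrt_nonneg _
    rcases le_or_gt (c * Real.sqrt R + a*d*x) 0 with h|h
    · have : 0 ≤ L*d*Real.sqrt (S*x^2+R) := by positivity
      linarith
    · have hsq : (c * Real.sqrt R + a*d*x)^2 ≤ (L*d*Real.sqrt (S*x^2+R))^2 := by
        have := hid x
        nlinarith [sq_nonneg (c*d*x - a*Real.sqrt R)]
      have := Real.sqrt_le_sqrt hsq
      rwa [Real.sqrt_sq h.le, Real.sqrt_sq (by positivity)] at this
  rw [hθ]
  constructor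
  · -- membership
    refine ⟨a * Real.sqrt R / (c*d), ?_⟩
    set x₀ := a * Real.sqrt R / (c*d) with hx0
    have hx0pos : 0 < x₀ := by positivity
    have hcd : c*d*x₀ = a*Real.sqrt R := by
      rw [hx0]; field_simp
    have heqsq : (L*d*Real.sqrt (S*x₀^2+R))^2 = (c * Real.sqrt R + a*d*x₀)^2 := by
      have h1 := hid x₀
      have h2 : (c*d*x₀ - a*Real.sqrt R)^2 = 0 := by rw [hcd]; ring
      linarith
    have heq : L*d*Real.sqrt (S*x₀^2+R) = c * Real.sqrt R + a*d*x₀ := by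
      have h1 := Real.sqrt_le_sqrt heqsq.le
      have h2 := Real.sqrt_le_sqrt heqsq.ge
      rw [Real.sqrt_sq (by positivity), Real.sqrt_sq (by positivity)] at h1 h2
      linarith
    show L * Real.sqrt (S*x₀^2+R) - a*x₀ = c / d * Real.sqrt R
    rw [div_mul_eq_mul_div, eq_div_iff hd.ne']
    linear_combination heq
  · rintro y ⟨x, rfl⟩
    have h1 := main x
    simp only
    rw [div_mul_eq_mul_div, div_le_iff₀ hd]
    nlinarith [h1]

theorem stmt_19 (n : ℕ) (σ z μ r L : ℝ) (γ u lam : Fin n → ℝ)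
    (hlam : ∀ i, 0 ≤ lam i)
    (hδ : 0 < σ^2 + ∑ i, (γ i)^2 * lam i)
    (hμr : μ > r)
    (hL : L > (μ - r) / Real.sqrt (σ^2 + ∑ i, (γ i)^2 * lam i))
    (hR : 0 < z^2 + ∑ i, (u i)^2 * lam i
      - (z*σ + ∑ i, u i * γ i * lam i)^2/(σ^2 + ∑ i, (γ i)^2 * lam i)) :
    let δ2 := σ^2 + ∑ i, (γ i)^2 * lam i
    let θ := (μ - r) / Real.sqrt δ2
    let R := z^2 + ∑ i, (u i)^2 * lam i - (z*σ + ∑ i, u i * γ i * lam i)^2/δ2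
    let πt := (z*σ + ∑ i, u i * γ i * lam i)/δ2
    IsLeast
      (Set.range (fun π : ℝ =>
        L * Real.sqrt ((π*σ - z)^2 + ∑ i, (π * γ i - u i)^2 * lam i) - π * (μ - r)))
      (Real.sqrt (L^2 - θ^2) * Real.sqrt R - πt * (μ - r)) := by
  intro δ2 θ R πt
  set S := σ^2 + ∑ i, (γ i)^2 * lam i with hS
  set a := μ - r with ha'
  have ha : 0 < a := sub_pos.2 hμr
  have hsum : ∀ π : ℝ, (π*σ - z)^2 + ∑ i, (π * γ i - u i)^2 * lam i
      = S*(π - πt)^2 + R := by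
    intro π
    have h1 : ∑ i, (π * γ i - u i)^2 * lam i
        = π^2 * (∑ i, (γ i)^2 * lam i) - 2*π*(∑ i, u i * γ i * lam i)
          + ∑ i, (u i)^2 * lam i := by
      rw [Finset.mul_sum, Finset.mul_sum, ← Finset.sum_sub_distrib,
        ← Finset.sum_add_distrib]
      exact Finset.sum_congr rfl fun i _ => by ring
    rw [h1]
    show _ = S * (π - (z*σ + ∑ i, u i * γ i * lam i)/δ2)^2
      + (z^2 + ∑ i, (u i)^2 * lam i - (z*σ + ∑ i, u i * γ i * lam i)^2/δ2)
    have hδ2 : δ2 = S := rfl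
    rw [hδ2]
    field_simp
    ring
  have hkey := key19 S R a L hδ hR ha hL
  constructor
  · obtain ⟨x, hx⟩ := hkey.1
    refine ⟨x + πt, ?_⟩
    simp only [hsum]
    have : S*(x + πt - πt)^2 + R = S*x^2 + R := by ring
    rw [this]
    simp only at hx
    rw [show θ = a / Real.sqrt S from rfl]
    linarith [hx]
  · rintro y ⟨π, rfl⟩
    have h2 := hkey.2 ⟨π - πt, rfl⟩
    simp only [hsum]
    simp only at h2
    have : S*(π - πt)^2 + R = S*(π-πt)^2 + R := rfl
    rw [show θ = a / Real.sqrt S from rfl]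
    nlinarith [h2]
end
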